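/- Let {A_n}_n be a sequence of n×n complex matrices and f : D ⊂ ℝ^k → ℂ a measurable function on a set D with 0 < μ_k(D) < ∞. Assume {A_n}_n has asymptotic singular value distribution described by f, i.e. for every continuous compactly supported F: ℝ → ℂ, lim_{n→∞}(1/n)∑_{j=1}^n F(σ_j(A_n)) = (1/μ_k(D))∫_D F(|f(x)|)dx. Then {A_n}_n is sparsely vanishing (meaning lim_{M→∞} limsup_{n→∞} (1/n)·#{i ∈ {1,…,n} : σ_i(A_n) < 1/M} = 0) if and only if f is sparsely vanishing (meaning the Lebesgue measure of {x ∈ D : f(x) = 0} is zero). -/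

import Mathlib

open MeasureTheory Filter Matrix

/-- The singular values of a square complex matrix, defined as the nonnegative
square roots of the eigenvalues of `Aᴴ * A`. -/
noncomputable def singularValues {n : ℕ} (A : Matrix (Fin n) (Fin n) ℂ) : Fin n → ℝ :=
  fun j => Real.sqrt ((Matrix.isHermitian_conjTranspose_mul_self A).eigenvalues j)

lemma singularValues_nonneg {n : ℕ} (A : Matrix (Fin n) (Fin n) ℂ) (j : Fin n) :
    0 ≤ singularValues A j := Real.sqrt_nonneg _

/-- A continuous bump: `1` on `[-1/M, 1/M]`, `0` outside `(-2/M, 2/M)`. -/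
noncomputable def svBump (M : ℕ) (x : ℝ) : ℝ := max 0 (min 1 (2 - M * |x|))

lemma svBump_nonneg (M : ℕ) (x : ℝ) : 0 ≤ svBump M x := le_max_left _ _
lemma svBump_le_one (M : ℕ) (x : ℝ) : svBump M x ≤ 1 := max_le (by norm_num) (min_le_left _ _)
lemma svBump_continuous (M : ℕ) : Continuous (svBump M) := by unfold svBump; fun_prop
lemma svBump_zero (M : ℕ) : svBump M 0 = 1 := by norm_num [svBump]

lemma svBump_eq_one {M : ℕ} (hM : 1 ≤ M) {x : ℝ} (hx : 0 ≤ x) (h : x < 1 / M) :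
    svBump M x = 1 := by
  have hMpos : (0:ℝ) < M := by exact_mod_cast hM
  have h1 : (M:ℝ) * |x| < 1 := by
    rw [abs_of_nonneg hx]
    calc (M:ℝ) * x < M * (1/M) := by exact (mul_lt_mul_iff_right₀ hMpos).2 h
    _ = 1 := by field_simp
  have : (1:ℝ) ≤ 2 - M * |x| := by linarith
  rw [svBump, min_eq_left this, max_eq_right (by linarith)]

lemma svBump_eq_zero {M : ℕ} {x : ℝ} (h : 2 ≤ (M:ℝ) * |x|) : svBump M x = 0 := by
  have h1 : min 1 (2 - (M:ℝ) * |x|) ≤ 0 := le_trans (min_le_right _ _) (by linarith)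
  simp [svBump, max_eq_left h1]

lemma svBump_hcs {M : ℕ} (hM : 1 ≤ M) : HasCompactSupport (fun x => (svBump M x : ℂ)) := by
  apply HasCompactSupport.intro (isCompact_Icc : IsCompact (Set.Icc (-2:ℝ) 2))
  intro x hx
  have hM' : (1:ℝ) ≤ M := by exact_mod_cast hM
  have h2 : 2 < |x| := by
    simp only [Set.mem_Icc, not_and_or, not_le] at hx
    rcases hx with h | h
    · rw [abs_of_nonpos (by linarith)]; linarith
    · rw [abs_of_nonneg (by linarith)]; linarith
  have : (2:ℝ) ≤ (M:ℝ) * |x| := by nlinarith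
  simp [svBump_eq_zero this]

lemma limsup_le_of_tendsto {u v : ℕ → ℝ} (h : ∀ n, u n ≤ v n) (hu : ∀ n, 0 ≤ u n) {l : ℝ}
    (hv : Tendsto v atTop (nhds l)) : limsup u atTop ≤ l := by
  rw [← hv.limsup_eq]
  have h1 : IsBoundedUnder (· ≥ ·) atTop u := isBoundedUnder_of ⟨0, fun n => hu n⟩
  exact limsup_le_limsup (Eventually.of_forall h) h1.isCoboundedUnder_le hv.isBoundedUnder_le

lemma le_limsup_of_tendsto {u v : ℕ → ℝ} (h : ∀ n, u n ≤ v n) (hv1 : ∀ n, v n ≤ 1)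
    (hv0 : ∀ n, 0 ≤ v n) {l : ℝ} (hu : Tendsto u atTop (nhds l)) : l ≤ limsup v atTop := by
  rw [← hu.liminf_eq]
  have h1 : IsBoundedUnder (· ≤ ·) atTop v := isBoundedUnder_of ⟨1, fun n => hv1 n⟩
  have h0 : IsBoundedUnder (· ≥ ·) atTop v := isBoundedUnder_of ⟨0, fun n => hv0 n⟩
  calc liminf u atTop ≤ liminf v atTop :=
        liminf_le_liminf (Eventually.of_forall h) hu.isBoundedUnder_ge h1.isCoboundedUnder_ge
    _ ≤ limsup v atTop := liminf_le_limsup h1 h0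

/-- If `{A n}ₙ` has asymptotic singular value distribution described
by a measurable `f : D ⊂ ℝᵏ → ℂ` (with `0 < μ(D) < ∞`), then `{A n}ₙ` is sparsely
vanishing if and only if `f` is sparsely vanishing (its zero set is Lebesgue-null). -/
theorem sparsely_vanishing_iff_symbol_sparsely_vanishing
    (k : ℕ) (D : Set (Fin k → ℝ)) (hD : MeasurableSet D)
    (hD0 : 0 < volume D) (hDfin : volume D < ⊤)
    (f : (Fin k → ℝ) → ℂ) (hf : Measurable f)
    (A : (n : ℕ) → Matrix (Fin n) (Fin n) ℂ)
    (hdistr : ∀ F : ℝ → ℂ, Continuous F → HasCompactSupport F →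
      Tendsto (fun n : ℕ => (n : ℂ)⁻¹ * ∑ j, F (singularValues (A n) j)) atTop
        (nhds (((volume D).toReal : ℂ)⁻¹ * ∫ x in D, F (‖f x‖)))) :
    Tendsto (fun M : ℕ =>
        limsup (fun n : ℕ =>
          ((Finset.univ.filter fun i : Fin n =>
            singularValues (A n) i < 1 / (M : ℝ)).card : ℝ) / n) atTop)
      atTop (nhds 0)
    ↔ volume {x ∈ D | f x = 0} = 0 := by
  have hc : (0:ℝ) < (volume D).toReal := ENNReal.toReal_pos hD0.ne' hDfin.ne
  -- the limit of averages of bumps of singular values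
  have hs : ∀ M : ℕ, 1 ≤ M →
      Tendsto (fun n : ℕ => (n:ℝ)⁻¹ * ∑ j, svBump M (singularValues (A n) j)) atTop
        (nhds ((volume D).toReal⁻¹ * ∫ x in D, svBump M (‖f x‖))) := by
    intro M hM
    have h := hdistr (fun x => (svBump M x : ℂ))
      (Complex.continuous_ofReal.comp (svBump_continuous M)) (svBump_hcs hM)
    have h2 := (Complex.continuous_re.tendsto _).comp h
    simp only [Function.comp_def] at h2
    have e1 : (fun n : ℕ => ((n:ℂ)⁻¹ * ∑ j, ((svBump M (singularValues (A n) j) : ℝ) : ℂ)).re)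
        = fun n : ℕ => (n:ℝ)⁻¹ * ∑ j, svBump M (singularValues (A n) j) := by
      funext n
      rw [show ((n:ℂ)⁻¹ * ∑ j, ((svBump M (singularValues (A n) j) : ℝ) : ℂ)) =
          ((((n:ℝ)⁻¹ * ∑ j, svBump M (singularValues (A n) j) : ℝ)) : ℂ) by push_cast; ring,
        Complex.ofReal_re]
    have e2 : ((((volume D).toReal : ℂ))⁻¹ * ∫ x in D, ((svBump M (‖f x‖) : ℝ) : ℂ)).re
        = (volume D).toReal⁻¹ * ∫ x in D, svBump M (‖f x‖) := by
      have hio : (∫ x in D, ((svBump M (‖f x‖) : ℝ) : ℂ))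
          = ((∫ x in D, svBump M (‖f x‖) : ℝ) : ℂ) := integral_ofReal
      rw [hio, show ((((volume D).toReal : ℝ) : ℂ))⁻¹ *
            (((∫ x in D, svBump M (‖f x‖) : ℝ)) : ℂ)
          = ((((volume D).toReal⁻¹ * ∫ x in D, svBump M (‖f x‖) : ℝ)) : ℂ) by
            push_cast; ring,
        Complex.ofReal_re]
    rw [e1, e2] at h2
    exact h2
  -- basic bounds on the counting sequence
  have cnt_nonneg : ∀ M n : ℕ, 0 ≤ ((Finset.univ.filter fun i : Fin n =>
      singularValues (A n) i < 1 / (M : ℝ)).card : ℝ) / n := fun M n => by positivity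
  have cnt_le_one : ∀ M n : ℕ, ((Finset.univ.filter fun i : Fin n =>
      singularValues (A n) i < 1 / (M : ℝ)).card : ℝ) / n ≤ 1 := by
    intro M n
    rcases Nat.eq_zero_or_pos n with h | h
    · subst h; simp
    · rw [div_le_one (by exact_mod_cast h)]
      exact_mod_cast (Finset.card_filter_le _ _).trans (by simp)
  -- upper bound: count ≤ bump average
  have hub : ∀ M : ℕ, 1 ≤ M → ∀ n : ℕ,
      ((Finset.univ.filter fun i : Fin n => singularValues (A n) i < 1 / (M : ℝ)).card : ℝ) / n
        ≤ (n:ℝ)⁻¹ * ∑ j, svBump M (singularValues (A n) j) := by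
    intro M hM n
    rw [div_eq_inv_mul]
    apply mul_le_mul_of_nonneg_left _ (by positivity)
    calc ((Finset.univ.filter fun i : Fin n => singularValues (A n) i < 1 / (M : ℝ)).card : ℝ)
        = ∑ _i ∈ (Finset.univ.filter fun i : Fin n =>
            singularValues (A n) i < 1 / (M : ℝ)), (1:ℝ) := by
          rw [Finset.sum_const, nsmul_eq_mul, mul_one]
      _ ≤ ∑ i ∈ (Finset.univ.filter fun i : Fin n =>
            singularValues (A n) i < 1 / (M : ℝ)), svBump M (singularValues (A n) i) :=
          Finset.sum_le_sum fun i hi => by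
            rw [svBump_eq_one hM (singularValues_nonneg _ _) (Finset.mem_filter.1 hi).2]
      _ ≤ ∑ j, svBump M (singularValues (A n) j) :=
          Finset.sum_le_sum_of_subset_of_nonneg (Finset.filter_subset _ _)
            (fun i _ _ => svBump_nonneg _ _)
  -- lower bound: bump(2M) average ≤ count
  have hlb : ∀ M : ℕ, 1 ≤ M → ∀ n : ℕ,
      (n:ℝ)⁻¹ * ∑ j, svBump (2*M) (singularValues (A n) j)
        ≤ ((Finset.univ.filter fun i : Fin n =>
            singularValues (A n) i < 1 / (M : ℝ)).card : ℝ) / n := by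
    intro M hM n
    rw [div_eq_inv_mul]
    apply mul_le_mul_of_nonneg_left _ (by positivity)
    have hM' : (1:ℝ) ≤ M := by exact_mod_cast hM
    calc (∑ j, svBump (2*M) (singularValues (A n) j))
        ≤ ∑ j : Fin n, (if singularValues (A n) j < 1 / (M:ℝ) then (1:ℝ) else 0) :=
          Finset.sum_le_sum fun j _ => by
            by_cases hj : singularValues (A n) j < 1 / (M:ℝ)
            · rw [if_pos hj]; exact svBump_le_one _ _
            · rw [if_neg hj]
              push_neg at hj
              apply le_of_eq (svBump_eq_zero _)
              have h0 : (0:ℝ) ≤ singularValues (A n) j := singularValues_nonneg _ _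
              rw [abs_of_nonneg h0]
              have hMpos : (0:ℝ) < M := by linarith
              have : (1:ℝ)/M * M = 1 := by field_simp
              push_cast
              nlinarith [mul_le_mul_of_nonneg_left hj (le_of_lt hMpos)]
      _ = ((Finset.univ.filter fun i : Fin n =>
            singularValues (A n) i < 1 / (M : ℝ)).card : ℝ) := by
          rw [Finset.sum_boole]
  -- the limit of the integrals of bumps by dominated convergence
  have hm0 : MeasurableSet {x : Fin k → ℝ | f x = 0} := hf (measurableSet_singleton 0)
  have hint : Tendsto (fun M : ℕ => ∫ x in D, svBump M (‖f x‖)) atTop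
      (nhds (volume {x ∈ D | f x = 0}).toReal) := by
    have hlim := MeasureTheory.tendsto_integral_of_dominated_convergence
      (μ := volume.restrict D)
      (F := fun M x => svBump M (‖f x‖))
      (f := fun x => Set.indicator {x : Fin k → ℝ | f x = 0} (fun _ => (1:ℝ)) x)
      (bound := fun _ => 1)
      (fun M => ((svBump_continuous M).measurable.comp
        (continuous_norm.measurable.comp hf)).aestronglyMeasurable)
      (integrableOn_const hDfin.ne)
      (fun M => Eventually.of_forall fun x => by
        rw [Real.norm_eq_abs, abs_of_nonneg (svBump_nonneg _ _)]; exact svBump_le_one _ _)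
      (Eventually.of_forall fun x => by
        by_cases hx : f x = 0
        · have : ∀ M : ℕ, svBump M (‖f x‖) = 1 := fun M => by
            rw [hx]; simpa using svBump_zero M
          simp only [Set.indicator_of_mem (show x ∈ {x : Fin k → ℝ | f x = 0} from hx), this]
          exact tendsto_const_nhds
        · have ha : 0 < ‖f x‖ := by simpa using hx
          have hev : ∀ᶠ M : ℕ in atTop, svBump M (‖f x‖) = 0 := by
            filter_upwards [((tendsto_natCast_atTop_atTop : Tendsto (Nat.cast : ℕ → ℝ) atTop atTop).atTop_mul_const ha).eventually_ge_atTop 2]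
              with M hM
            exact svBump_eq_zero (by rwa [abs_of_nonneg ha.le])
          simp only [Set.indicator_of_notMem (show x ∉ {x : Fin k → ℝ | f x = 0} from hx)]
          exact Tendsto.congr' (hev.mono fun M h => h.symm) tendsto_const_nhds)
    have e : ∫ x in D, Set.indicator {x : Fin k → ℝ | f x = 0} (fun _ => (1:ℝ)) x
        = (volume {x ∈ D | f x = 0}).toReal := by
      rw [MeasureTheory.integral_indicator hm0, MeasureTheory.setIntegral_const, smul_eq_mul,
        mul_one, Measure.real, Measure.restrict_apply hm0]
      have : {x : Fin k → ℝ | f x = 0} ∩ D = {x ∈ D | f x = 0} := by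
        ext x; exact ⟨fun ⟨a, b⟩ => ⟨b, a⟩, fun ⟨a, b⟩ => ⟨b, a⟩⟩
      rw [this]
    rw [e] at hlim
    exact hlim
  have hI2 : Tendsto (fun M : ℕ => (volume D).toReal⁻¹ * ∫ x in D, svBump M (‖f x‖))
      atTop (nhds ((volume D).toReal⁻¹ * (volume {x ∈ D | f x = 0}).toReal)) :=
    hint.const_mul _
  -- squeeze for the limsup sequence
  have hL : Tendsto (fun M : ℕ =>
      limsup (fun n : ℕ => ((Finset.univ.filter fun i : Fin n =>
        singularValues (A n) i < 1 / (M : ℝ)).card : ℝ) / n) atTop) atTop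
      (nhds ((volume D).toReal⁻¹ * (volume {x ∈ D | f x = 0}).toReal)) := by
    have h2M : Tendsto (fun M : ℕ => (volume D).toReal⁻¹ *
        ∫ x in D, svBump (2*M) (‖f x‖)) atTop
        (nhds ((volume D).toReal⁻¹ * (volume {x ∈ D | f x = 0}).toReal)) :=
      hI2.comp (tendsto_atTop_atTop_of_monotone (fun a b h => by omega) (fun b => ⟨b, by omega⟩))
    apply tendsto_of_tendsto_of_tendsto_of_le_of_le' h2M hI2
    · filter_upwards [eventually_ge_atTop 1] with M hM
      exact le_limsup_of_tendsto (hlb M hM) (cnt_le_one M) (cnt_nonneg M) (hs (2*M) (by omega))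
    · filter_upwards [eventually_ge_atTop 1] with M hM
      exact limsup_le_of_tendsto (hub M hM) (cnt_nonneg M) (hs M hM)
  constructor
  · intro h
    have h0 : (volume D).toReal⁻¹ * (volume {x ∈ D | f x = 0}).toReal = 0 :=
      tendsto_nhds_unique hL h
    have ht : (volume {x ∈ D | f x = 0}).toReal = 0 := by
      rcases mul_eq_zero.1 h0 with h' | h'
      · exact absurd h' (inv_ne_zero hc.ne')
      · exact h'
    have hfin : volume {x ∈ D | f x = 0} ≠ ⊤ :=
      ((measure_mono (Set.sep_subset _ _)).trans_lt hDfin).ne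
    exact ((ENNReal.toReal_eq_zero_iff _).1 ht).resolve_right hfin
  · intro h
    rw [h] at hL
    simpa using hL
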